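/- Let G be a connected acyclic graph (a tree, with vertex set of arbitrary cardinality) in which every vertex has degree exactly 2. Then G is isomorphic to the two-way infinite path graph (vertex set ℤ, with i and j adjacent iff |i - j| = 1). -/

import Mathlib

/-- The two-way infinite path graph on `ℤ`: `i` and `j` are adjacent iff
`|i - j| = 1`. -/
def pathZ : SimpleGraph ℤ := SimpleGraph.fromRel (fun i j => i + 1 = j)

namespace Stmt19

open SimpleGraph

variable {V : Type*}

open scoped Classical in
noncomputable def nextFn (G : SimpleGraph V) (u w : V) : V :=
  if h : ∃ x, x ∈ G.neighborSet w \ {u} then h.choose else u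

lemma nextFn_spec {G : SimpleGraph V} {u w : V}
    (hdeg : (G.neighborSet w).ncard = 2) (hadj : G.Adj w u) :
    G.Adj w (nextFn G u w) ∧ nextFn G u w ≠ u ∧
      G.neighborSet w = {u, nextFn G u w} := by
  have hfin : (G.neighborSet w).Finite := Set.finite_of_ncard_ne_zero (by omega)
  have hu : u ∈ G.neighborSet w := hadj
  have h1 : (G.neighborSet w \ {u}).ncard = 1 := by
    rw [Set.ncard_diff_singleton_of_mem hu, hdeg]
  obtain ⟨x, hx⟩ := Set.ncard_eq_one.1 h1
  have hex : ∃ y, y ∈ G.neighborSet w \ {u} := ⟨x, by simp [hx]⟩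
  have hmem : nextFn G u w ∈ G.neighborSet w \ {u} := by
    rw [nextFn]
    rw [dif_pos hex]
    exact hex.choose_spec
  refine ⟨hmem.1, hmem.2, ?_⟩
  refine (Set.eq_of_subset_of_ncard_le ?_ ?_ hfin).symm
  · intro y hy
    rcases hy with rfl | rfl
    · exact hu
    · exact hmem.1
  · rw [hdeg, Set.ncard_pair (Ne.symm hmem.2)]

noncomputable def rayAux (G : SimpleGraph V) (u w : V) : ℕ → V × V
  | 0 => (u, w)
  | n + 1 => ((rayAux G u w n).2, nextFn G (rayAux G u w n).1 (rayAux G u w n).2)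

noncomputable def ray (G : SimpleGraph V) (u w : V) (n : ℕ) : V := (rayAux G u w n).1

@[simp] lemma ray_zero (G : SimpleGraph V) (u w : V) : ray G u w 0 = u := rfl

@[simp] lemma ray_one (G : SimpleGraph V) (u w : V) : ray G u w 1 = w := rfl

lemma ray_succ (G : SimpleGraph V) (u w : V) (n : ℕ) :
    ray G u w (n + 1) = (rayAux G u w n).2 := rfl

lemma ray_add_two (G : SimpleGraph V) (u w : V) (n : ℕ) :
    ray G u w (n + 2) = nextFn G (ray G u w n) (ray G u w (n + 1)) := by
  show (rayAux G u w (n+2)).1 = _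
  rw [rayAux, rayAux]
  rfl

variable {G : SimpleGraph V} {u w : V}

lemma ray_adj (hdeg : ∀ v : V, (G.neighborSet v).ncard = 2) (huw : G.Adj u w) :
    ∀ n, G.Adj (ray G u w n) (ray G u w (n + 1)) := by
  intro n
  induction n using Nat.strong_induction_on with
  | _ n ih =>
    match n with
    | 0 => simpa using huw
    | (m + 1) =>
      have hm := ih m (by omega)
      rw [ray_add_two]
      exact (nextFn_spec (hdeg _) hm.symm).1

lemma ray_ne (hdeg : ∀ v : V, (G.neighborSet v).ncard = 2) (huw : G.Adj u w) (n : ℕ) :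
    ray G u w (n + 2) ≠ ray G u w n := by
  rw [ray_add_two]
  exact (nextFn_spec (hdeg _) (ray_adj hdeg huw n).symm).2.1

noncomputable def walkTo (hdeg : ∀ v : V, (G.neighborSet v).ncard = 2) (huw : G.Adj u w) :
    ∀ n : ℕ, G.Walk (ray G u w n) u
  | 0 => Walk.nil
  | n + 1 => Walk.cons (ray_adj hdeg huw n).symm (walkTo hdeg huw n)

variable (hdeg : ∀ v : V, (G.neighborSet v).ncard = 2) (huw : G.Adj u w)

lemma walkTo_support : ∀ n, (walkTo hdeg huw n).support
    = ((List.range (n + 1)).map (ray G u w)).reverse := by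
  intro n
  induction n with
  | zero => simp [walkTo, List.range_succ]
  | succ m ih =>
    rw [walkTo, Walk.support_cons, ih, List.range_succ (n := m + 1)]
    simp

lemma walkTo_length : ∀ n, (walkTo hdeg huw n).length = n := by
  intro n
  induction n with
  | zero => rfl
  | succ m ih => rw [walkTo, Walk.length_cons, ih]

lemma mem_walkTo_support {n : ℕ} {v : V} :
    v ∈ (walkTo hdeg huw n).support ↔ ∃ k ≤ n, ray G u w k = v := by
  rw [walkTo_support]
  simp [Nat.lt_succ_iff]

lemma mem_walkTo_edges {n : ℕ} {e : Sym2 V} :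
    e ∈ (walkTo hdeg huw n).edges → ∃ k, k < n ∧ e = s(ray G u w (k + 1), ray G u w k) := by
  induction n with
  | zero => simp [walkTo]
  | succ m ih =>
    rw [walkTo, Walk.edges_cons]
    intro h
    rcases List.mem_cons.1 h with h | h
    · exact ⟨m, by omega, h⟩
    · obtain ⟨k, hk, hke⟩ := ih h
      exact ⟨k, by omega, hke⟩

lemma walkTo_isPath (hac : G.IsAcyclic) : ∀ n, (walkTo hdeg huw n).IsPath := by
  classical
  intro n
  induction n with
  | zero => exact Walk.IsPath.nil
  | succ m ih =>
    rw [walkTo]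
    refine ih.cons ?_
    intro hmem
    -- injectivity of ray on [0, m]
    have hnodup : (((List.range (m + 1)).map (ray G u w)).reverse).Nodup := by
      rw [← walkTo_support hdeg huw]
      exact ih.support_nodup
    rw [List.nodup_reverse] at hnodup
    have hinj : ∀ i ∈ List.range (m + 1), ∀ j ∈ List.range (m + 1),
        ray G u w i = ray G u w j → i = j := List.inj_on_of_nodup_map hnodup
    obtain ⟨k, hk, hkv⟩ := (mem_walkTo_support hdeg huw).1 hmem
    -- ray (m+1) = ray k with k ≤ m
    rcases Nat.lt_or_ge k m with hkm | hkm
    · -- k < m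
      rcases Nat.lt_or_ge (k + 1) m with hk1 | hk1
      · -- k + 2 ≤ m : build a cycle
        have hkmem : ray G u w k ∈ (walkTo hdeg huw m).support :=
          (mem_walkTo_support hdeg huw).2 ⟨k, hk, rfl⟩
        have hq : ((walkTo hdeg huw m).takeUntil _ hkmem).IsPath := ih.takeUntil hkmem
        have hadjk : G.Adj (ray G u w k) (ray G u w m) := by
          have h2 := ray_adj hdeg huw m
          rw [← hkv] at h2
          exact h2.symm
        have hne : s(ray G u w k, ray G u w m) ∉
            ((walkTo hdeg huw m).takeUntil _ hkmem).edges := by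
          intro he
          have he' := Walk.edges_takeUntil_subset _ hkmem he
          obtain ⟨j, hj, hje⟩ := mem_walkTo_edges hdeg huw he'
          rw [Sym2.eq_iff] at hje
          rcases hje with ⟨h1, h2⟩ | ⟨h1, h2⟩
          · have := hinj _ (by simp only [List.mem_range]; omega) _ (by simp only [List.mem_range]; omega) h2
            omega
          · have e1 := hinj _ (by simp only [List.mem_range]; omega) _ (by simp only [List.mem_range]; omega) h1
            have e2 := hinj _ (by simp only [List.mem_range]; omega) _ (by simp only [List.mem_range]; omega) h2
            omega
        exact hac _ ((Walk.cons_isCycle_iff _ hadjk).2 ⟨hq, hne⟩)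
      · -- k + 1 = m : backtrack
        have : k + 1 = m := by omega
        subst this
        exact ray_ne hdeg huw k hkv.symm
    · -- k = m
      have : k = m := by omega
      subst this
      exact G.ne_of_adj (ray_adj hdeg huw k) hkv

lemma ray_injective (hdeg : ∀ v : V, (G.neighborSet v).ncard = 2) (huw : G.Adj u w)
    (hac : G.IsAcyclic) : Function.Injective (ray G u w) := by
  intro i j hij
  rcases Nat.le_total i j with h | h
  · have hnodup : (((List.range (j + 1)).map (ray G u w)).reverse).Nodup := by
      rw [← walkTo_support hdeg huw]
      exact (walkTo_isPath hdeg huw hac j).support_nodup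
    rw [List.nodup_reverse] at hnodup
    exact List.inj_on_of_nodup_map hnodup (by simp only [List.mem_range]; omega) (by simp only [List.mem_range]; omega) hij
  · have hnodup : (((List.range (i + 1)).map (ray G u w)).reverse).Nodup := by
      rw [← walkTo_support hdeg huw]
      exact (walkTo_isPath hdeg huw hac i).support_nodup
    rw [List.nodup_reverse] at hnodup
    exact List.inj_on_of_nodup_map hnodup (by simp only [List.mem_range]; omega) (by simp only [List.mem_range]; omega) hij

lemma ray_cross {w' : V} (hdeg : ∀ v : V, (G.neighborSet v).ncard = 2) (huw : G.Adj u w)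
    (hac : G.IsAcyclic) (huw' : G.Adj u w') (hww' : w ≠ w')
    {i j : ℕ} (hi : 1 ≤ i) (hj : 1 ≤ j) :
    ray G u w i ≠ ray G u w' j := by
  intro hij
  have hval : walkTo hdeg huw i = (walkTo hdeg huw' j).copy hij.symm rfl :=
    congrArg Subtype.val (isAcyclic_iff_path_unique.1 hac
      ⟨walkTo hdeg huw i, walkTo_isPath hdeg huw hac i⟩
      ⟨(walkTo hdeg huw' j).copy hij.symm rfl,
        (Walk.isPath_copy _ _ _).2 (walkTo_isPath hdeg huw' hac j)⟩)
  have hsupp : (walkTo hdeg huw i).support = (walkTo hdeg huw' j).support := by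
    rw [hval, Walk.support_copy]
  rw [walkTo_support hdeg huw, walkTo_support hdeg huw'] at hsupp
  rw [List.reverse_inj] at hsupp
  have hlen : i = j := by
    have := congrArg List.length hsupp
    simpa using this
  subst hlen
  rw [List.map_inj_left] at hsupp
  have := hsupp 1 (by simp only [List.mem_range]; omega)
  simp at this
  exact hww' this

end Stmt19

open Stmt19 in
/-- A tree in which every vertex has degree exactly `2` is
isomorphic to the two-way infinite path graph on `ℤ`. -/
theorem stmt_19 {V : Type*} (G : SimpleGraph V) (htree : G.IsTree)
    (hdeg : ∀ v : V, (G.neighborSet v).ncard = 2) :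
    Nonempty (G ≃g pathZ) := by
  classical
  obtain ⟨hconn, hac⟩ := htree
  obtain ⟨v0⟩ := hconn.nonempty
  obtain ⟨a, b, hab, hset⟩ := Set.ncard_eq_two.1 (hdeg v0)
  have ha : G.Adj v0 a := by rw [← SimpleGraph.mem_neighborSet, hset]; simp
  have hb : G.Adj v0 b := by rw [← SimpleGraph.mem_neighborSet, hset]; simp
  set f : ℤ → V := fun n =>
    if 0 ≤ n then ray G v0 a n.toNat else ray G v0 b (-n).toNat with hf
  have hInjA := ray_injective hdeg ha hac
  have hInjB := ray_injective hdeg hb hac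
  have hcross : ∀ i j : ℕ, 1 ≤ i → 1 ≤ j → ray G v0 a i ≠ ray G v0 b j :=
    fun i j hi hj => ray_cross hdeg ha hac hb hab hi hj
  have hinj : Function.Injective f := by
    intro m n hmn
    simp only [hf] at hmn
    rcases le_or_gt 0 m with hm | hm <;> rcases le_or_gt 0 n with hn | hn
    · rw [if_pos hm, if_pos hn] at hmn
      have := hInjA hmn; omega
    · rw [if_pos hm, if_neg (by omega)] at hmn
      rcases Nat.eq_zero_or_pos m.toNat with h0 | h0
      · rw [h0] at hmn
        have h2 : (0 : ℕ) = (-n).toNat := hInjB hmn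
        omega
      · exact absurd hmn (hcross _ _ (by omega) (by omega))
    · rw [if_neg (by omega), if_pos hn] at hmn
      rcases Nat.eq_zero_or_pos n.toNat with h0 | h0
      · rw [h0] at hmn
        have h2 : (0 : ℕ) = (-m).toNat := hInjB hmn.symm
        omega
      · exact absurd hmn.symm (hcross _ _ (by omega) (by omega))
    · rw [if_neg (by omega), if_neg (by omega)] at hmn
      have := hInjB hmn; omega
  have hadj : ∀ n : ℤ, G.Adj (f n) (f (n + 1)) := by
    intro n
    simp only [hf]
    rcases le_or_gt 0 n with hn | hn
    · rw [if_pos hn, if_pos (by omega)]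
      have h1 : (n + 1).toNat = n.toNat + 1 := by omega
      rw [h1]
      exact ray_adj hdeg ha n.toNat
    · rcases eq_or_lt_of_le (show n ≤ -1 by omega) with h1 | h1
      · subst h1
        rw [if_neg (by norm_num), if_pos (by norm_num)]
        have e1 : ((-1 : ℤ) + 1).toNat = 0 := by norm_num
        have e2 : (-(-1 : ℤ)).toNat = 1 := by norm_num
        rw [e1, e2, ray_zero, ray_one]
        exact hb.symm
      · rw [if_neg (by omega), if_neg (by omega)]
        have h2 : (-n).toNat = (-(n + 1)).toNat + 1 := by omega
        rw [h2]
        exact (ray_adj hdeg hb _).symm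
  have hne : ∀ n : ℤ, f (n - 1) ≠ f (n + 1) := by
    intro n h
    have := hinj h
    omega
  have hnbr : ∀ n : ℤ, G.neighborSet (f n) = {f (n - 1), f (n + 1)} := by
    intro n
    have h1 : G.Adj (f n) (f (n - 1)) := by
      have := hadj (n - 1)
      rw [sub_add_cancel] at this
      exact this.symm
    have h2 : G.Adj (f n) (f (n + 1)) := hadj n
    refine (Set.eq_of_subset_of_ncard_le ?_ ?_
      (Set.finite_of_ncard_ne_zero (by rw [hdeg]; omega))).symm
    · rintro y (rfl | rfl)
      · exact h1
      · exact h2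
    · rw [hdeg, Set.ncard_pair (hne n)]
  have hsurj : Function.Surjective f := by
    have key : ∀ (x y : V), G.Walk x y → (∃ n, f n = x) → ∃ n, f n = y := by
      intro x y p
      induction p with
      | nil => exact id
      | cons h p ih =>
        rintro ⟨n, rfl⟩
        apply ih
        have hm : _ ∈ G.neighborSet (f n) := h
        rw [hnbr n] at hm
        simp only [Set.mem_insert_iff, Set.mem_singleton_iff] at hm
        rcases hm with rfl | rfl
        exacts [⟨n - 1, rfl⟩, ⟨n + 1, rfl⟩]
    intro v
    obtain ⟨p⟩ := hconn.preconnected v0 v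
    exact key v0 v p ⟨0, by simp [hf]⟩
  refine ⟨(SimpleGraph.Iso.symm ⟨Equiv.ofBijective f ⟨hinj, hsurj⟩, ?_⟩)⟩
  intro m n
  show G.Adj (f m) (f n) ↔ pathZ.Adj m n
  constructor
  · intro h
    have hm : f n ∈ G.neighborSet (f m) := h
    rw [hnbr m] at hm
    simp only [Set.mem_insert_iff, Set.mem_singleton_iff] at hm
    have : n = m - 1 ∨ n = m + 1 := by
      rcases hm with hm | hm
      · exact Or.inl (hinj hm)
      · exact Or.inr (hinj hm)
    simp only [pathZ, SimpleGraph.fromRel_adj]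
    omega
  · intro h
    simp only [pathZ, SimpleGraph.fromRel_adj] at h
    rcases h.2 with h2 | h2
    · rw [← h2]; exact hadj m
    · rw [← h2]; exact (hadj n).symm
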